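/- arXiv:0912.4872 — 2 statements merged into one kernel-verified Lean document; each statement's English description precedes it below -/
import Mathlib

section
/- Conservation law for directed information (Massey–Massey): for any jointly distributed finitely valued random vectors X^n and Y^n, I(X^n; Y^n) = I(X^n → Y^n) + I(Y^{n-1} → X^n), where I(Y^{n-1} → X^n) := Σ_{i=2}^n I(Y^{i-1}; X_i | X^{i-1}). -/
open scoped Classical
open Real

noncomputable section

variable {α β : Type} [Fintype α] [DecidableEq α] [Fintype β] [DecidableEq β]

/-- Probability of the event `E` under the joint pmf `p` of `(X^n, Y^n)`. -/
def pr {n : ℕ} (p : (Fin n → α) → (Fin n → β) → ℝ)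
    (E : (Fin n → α) → (Fin n → β) → Prop) : ℝ :=
  ∑ x, ∑ y, if E x y then p x y else 0

/-- `p` is a probability mass function on pairs of sequences. -/
def IsPmf {n : ℕ} (p : (Fin n → α) → (Fin n → β) → ℝ) : Prop :=
  (∀ x y, 0 ≤ p x y) ∧ ∑ x, ∑ y, p x y = 1

/-- The conditional pmf `p(x_i | x^{i-1}, y^{i-d})` evaluated along `(x, y)`. -/
def condX {n : ℕ} (p : (Fin n → α) → (Fin n → β) → ℝ) (d : ℕ) (i : Fin n)
    (x : Fin n → α) (y : Fin n → β) : ℝ :=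
  pr p (fun x' y' => (∀ j, j < i → x' j = x j) ∧ x' i = x i ∧
      ∀ j : Fin n, (j : ℕ) + d ≤ (i : ℕ) → y' j = y j) /
  pr p (fun x' y' => (∀ j, j < i → x' j = x j) ∧
      ∀ j : Fin n, (j : ℕ) + d ≤ (i : ℕ) → y' j = y j)

/-- The conditional pmf `p(y_i | y^{i-1}, x^{i-d})` evaluated along `(x, y)`. -/
def condY {n : ℕ} (p : (Fin n → α) → (Fin n → β) → ℝ) (d : ℕ) (i : Fin n)
    (x : Fin n → α) (y : Fin n → β) : ℝ :=
  pr p (fun x' y' => (∀ j, j < i → y' j = y j) ∧ y' i = y i ∧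
      ∀ j : Fin n, (j : ℕ) + d ≤ (i : ℕ) → x' j = x j) /
  pr p (fun x' y' => (∀ j, j < i → y' j = y j) ∧
      ∀ j : Fin n, (j : ℕ) + d ≤ (i : ℕ) → x' j = x j)

/-- Causally conditioned pmf `p(x^n || y^{n-d}) = ∏ᵢ p(xᵢ | x^{i-1}, y^{i-d})`. -/
def ccX {n : ℕ} (p : (Fin n → α) → (Fin n → β) → ℝ) (d : ℕ)
    (x : Fin n → α) (y : Fin n → β) : ℝ :=
  ∏ i, condX p d i x y

/-- Causally conditioned pmf `p(y^n || x^{n-d}) = ∏ᵢ p(yᵢ | y^{i-1}, x^{i-d})`. -/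
def ccY {n : ℕ} (p : (Fin n → α) → (Fin n → β) → ℝ) (d : ℕ)
    (x : Fin n → α) (y : Fin n → β) : ℝ :=
  ∏ i, condY p d i x y

/-- Marginal pmf of `X^n`. -/
def pX {n : ℕ} (p : (Fin n → α) → (Fin n → β) → ℝ) (x : Fin n → α) : ℝ := ∑ y, p x y

/-- Marginal pmf of `Y^n`. -/
def pY {n : ℕ} (p : (Fin n → α) → (Fin n → β) → ℝ) (y : Fin n → β) : ℝ := ∑ x, p x y

/-- `H(X^n)` in bits. -/
def HX {n : ℕ} (p : (Fin n → α) → (Fin n → β) → ℝ) : ℝ :=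
  -(∑ x, ∑ y, p x y * Real.logb 2 (pX p x))

/-- `H(Y^n)` in bits. -/
def HY {n : ℕ} (p : (Fin n → α) → (Fin n → β) → ℝ) : ℝ :=
  -(∑ x, ∑ y, p x y * Real.logb 2 (pY p y))

/-- Joint entropy `H(X^n, Y^n)` in bits. -/
def Hjoint {n : ℕ} (p : (Fin n → α) → (Fin n → β) → ℝ) : ℝ :=
  -(∑ x, ∑ y, p x y * Real.logb 2 (p x y))

/-- Conditional entropy `H(X_i | X^{i-1}, Y^{i-d})` in bits. -/
def HcondX {n : ℕ} (p : (Fin n → α) → (Fin n → β) → ℝ) (d : ℕ) (i : Fin n) : ℝ :=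
  -(∑ x, ∑ y, p x y * Real.logb 2 (condX p d i x y))

/-- Conditional entropy `H(Y_i | Y^{i-1}, X^{i-d})` in bits. -/
def HcondY {n : ℕ} (p : (Fin n → α) → (Fin n → β) → ℝ) (d : ℕ) (i : Fin n) : ℝ :=
  -(∑ x, ∑ y, p x y * Real.logb 2 (condY p d i x y))

/-- Causally conditional entropy `H(X^n || Y^{n-d}) = Σᵢ H(Xᵢ | X^{i-1}, Y^{i-d})`. -/
def HccX {n : ℕ} (p : (Fin n → α) → (Fin n → β) → ℝ) (d : ℕ) : ℝ := ∑ i, HcondX p d i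

/-- Causally conditional entropy `H(Y^n || X^{n-d})`. -/
def HccY {n : ℕ} (p : (Fin n → α) → (Fin n → β) → ℝ) (d : ℕ) : ℝ := ∑ i, HcondY p d i

/-- Conditional mutual information `I(Y^i; X_i | X^{i-1})`
(as the expectation of `log (p(xᵢ|x^{i-1},y^i) / p(xᵢ|x^{i-1}))`;
note `condX p n` is `p(xᵢ|x^{i-1})`, conditioning on no `y`'s at all). -/
def cmiYX {n : ℕ} (p : (Fin n → α) → (Fin n → β) → ℝ) (i : Fin n) : ℝ :=
  ∑ x, ∑ y, p x y * Real.logb 2 (condX p 0 i x y / condX p n i x y)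

/-- Conditional mutual information `I(X^i; Y_i | Y^{i-1})`. -/
def cmiXY {n : ℕ} (p : (Fin n → α) → (Fin n → β) → ℝ) (i : Fin n) : ℝ :=
  ∑ x, ∑ y, p x y * Real.logb 2 (condY p 0 i x y / condY p n i x y)

/-- Directed information `I(Y^n → X^n) = Σᵢ I(Y^i; X_i | X^{i-1})`. -/
def dirYX {n : ℕ} (p : (Fin n → α) → (Fin n → β) → ℝ) : ℝ := ∑ i, cmiYX p i

/-- Directed information `I(X^n → Y^n) = Σᵢ I(X^i; Y_i | Y^{i-1})`. -/
def dirXY {n : ℕ} (p : (Fin n → α) → (Fin n → β) → ℝ) : ℝ := ∑ i, cmiXY p i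

/-- Directed information `I(Y^{n-1} → X^n) = Σᵢ I(Y^{i-1}; X_i | X^{i-1})`
(the term for `i = 1` vanishes, so we may sum over all `i`). -/
def dirY1X {n : ℕ} (p : (Fin n → α) → (Fin n → β) → ℝ) : ℝ :=
  ∑ i, ∑ x, ∑ y, p x y * Real.logb 2 (condX p 1 i x y / condX p n i x y)

/-- Mutual information `I(X^n; Y^n)` in bits. -/
def miXY {n : ℕ} (p : (Fin n → α) → (Fin n → β) → ℝ) : ℝ :=
  ∑ x, ∑ y, p x y * Real.logb 2 (p x y / (pX p x * pY p y))

section Aux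

variable {n : ℕ}

lemma pr_congr (p : (Fin n → α) → (Fin n → β) → ℝ)
    {E F : (Fin n → α) → (Fin n → β) → Prop} (h : ∀ x y, E x y ↔ F x y) :
    pr p E = pr p F := by
  unfold pr
  refine Finset.sum_congr rfl fun x _ => Finset.sum_congr rfl fun y _ => ?_
  exact if_congr (h x y) rfl rfl

/-- `pr` of the event "x' agrees with x below a, y' agrees with y below b". -/
def prab (p : (Fin n → α) → (Fin n → β) → ℝ)
    (x : Fin n → α) (y : Fin n → β) (a b : ℕ) : ℝ :=
  pr p (fun x' y' => (∀ j : Fin n, (j : ℕ) < a → x' j = x j) ∧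
    (∀ j : Fin n, (j : ℕ) < b → y' j = y j))

lemma prab_zero {p : (Fin n → α) → (Fin n → β) → ℝ} (hp : IsPmf p)
    (x : Fin n → α) (y : Fin n → β) : prab p x y 0 0 = 1 := by
  unfold prab pr
  rw [← hp.2]
  refine Finset.sum_congr rfl fun x' _ => Finset.sum_congr rfl fun y' _ => ?_
  rw [if_pos ⟨fun j hj => absurd hj (by omega), fun j hj => absurd hj (by omega)⟩]

lemma prab_nn (p : (Fin n → α) → (Fin n → β) → ℝ)
    (x : Fin n → α) (y : Fin n → β) : prab p x y n n = p x y := by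
  unfold prab
  have h : pr p (fun x' y' => (∀ j : Fin n, (j : ℕ) < n → x' j = x j) ∧
      (∀ j : Fin n, (j : ℕ) < n → y' j = y j)) = pr p (fun x' y' => x' = x ∧ y' = y) := by
    refine pr_congr p fun x' y' => ?_
    constructor
    · rintro ⟨h1, h2⟩
      exact ⟨funext fun j => h1 j j.isLt, funext fun j => h2 j j.isLt⟩
    · rintro ⟨rfl, rfl⟩; exact ⟨fun _ _ => rfl, fun _ _ => rfl⟩
  rw [h]; unfold pr
  simp +contextual [ite_and, Finset.sum_ite_eq']

lemma prab_n0 (p : (Fin n → α) → (Fin n → β) → ℝ)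
    (x : Fin n → α) (y : Fin n → β) : prab p x y n 0 = pX p x := by
  unfold prab
  have h : pr p (fun x' y' => (∀ j : Fin n, (j : ℕ) < n → x' j = x j) ∧
      (∀ j : Fin n, (j : ℕ) < 0 → y' j = y j)) = pr p (fun x' _ => x' = x) := by
    refine pr_congr p fun x' y' => ?_
    constructor
    · rintro ⟨h1, _⟩; exact funext fun j => h1 j j.isLt
    · rintro rfl; exact ⟨fun _ _ => rfl, fun j hj => absurd hj (by omega)⟩
  rw [h]; unfold pr pX
  rw [Finset.sum_comm]
  refine Finset.sum_congr rfl fun y' _ => ?_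
  refine (Finset.sum_eq_single x (fun b _ hb => ?_)
    (fun hx => absurd (Finset.mem_univ x) hx)).trans ?_
  · exact if_neg hb
  · exact if_pos rfl

lemma prab_0n (p : (Fin n → α) → (Fin n → β) → ℝ)
    (x : Fin n → α) (y : Fin n → β) : prab p x y 0 n = pY p y := by
  unfold prab
  have h : pr p (fun x' y' => (∀ j : Fin n, (j : ℕ) < 0 → x' j = x j) ∧
      (∀ j : Fin n, (j : ℕ) < n → y' j = y j)) = pr p (fun _ y' => y' = y) := by
    refine pr_congr p fun x' y' => ?_
    constructor
    · rintro ⟨_, h2⟩; exact funext fun j => h2 j j.isLt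
    · rintro rfl; exact ⟨fun j hj => absurd hj (by omega), fun _ _ => rfl⟩
  rw [h]; unfold pr pY
  refine Finset.sum_congr rfl fun x' _ => ?_
  refine (Finset.sum_eq_single y (fun b _ hb => ?_)
    (fun hy => absurd (Finset.mem_univ y) hy)).trans ?_
  · exact if_neg hb
  · exact if_pos rfl

lemma sum_delta (p : (Fin n → α) → (Fin n → β) → ℝ)
    (x : Fin n → α) (y : Fin n → β) :
    (∑ x' : Fin n → α, ∑ y' : Fin n → β, if x' = x ∧ y' = y then p x' y' else 0) = p x y := by
  simp +contextual [ite_and, Finset.sum_ite_eq']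

lemma le_prab {p : (Fin n → α) → (Fin n → β) → ℝ} (hp : IsPmf p)
    (x : Fin n → α) (y : Fin n → β) (a b : ℕ) : p x y ≤ prab p x y a b := by
  unfold prab pr
  rw [← sum_delta p x y]
  refine Finset.sum_le_sum fun x' _ => Finset.sum_le_sum fun y' _ => ?_
  by_cases hxy : x' = x ∧ y' = y
  · rw [if_pos hxy, if_pos (show (∀ j : Fin n, (j : ℕ) < a → x' j = x j) ∧
        (∀ j : Fin n, (j : ℕ) < b → y' j = y j) from
      ⟨fun j _ => by rw [hxy.1], fun j _ => by rw [hxy.2]⟩)]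
  · rw [if_neg hxy]
    split
    · exact hp.1 _ _
    · exact le_refl 0

lemma prab_pos {p : (Fin n → α) → (Fin n → β) → ℝ} (hp : IsPmf p)
    {x : Fin n → α} {y : Fin n → β} (h : 0 < p x y) (a b : ℕ) :
    0 < prab p x y a b := lt_of_lt_of_le h (le_prab hp x y a b)

lemma condX_n_eq (p : (Fin n → α) → (Fin n → β) → ℝ) (i : Fin n)
    (x : Fin n → α) (y : Fin n → β) :
    condX p n i x y = prab p x y ((i : ℕ)+1) 0 / prab p x y (i : ℕ) 0 := by
  unfold condX prab
  congr 1
  · refine pr_congr p fun x' y' => ?_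
    constructor
    · rintro ⟨h1, h2, _⟩
      refine ⟨fun j hj => ?_, fun j hj => absurd hj (by omega)⟩
      rcases Nat.lt_succ_iff_lt_or_eq.mp hj with hj | hj
      · exact h1 j (Fin.lt_def.mpr hj)
      · rw [show j = i from Fin.ext hj]; exact h2
    · rintro ⟨h1, _⟩
      exact ⟨fun j hj => h1 j (Nat.lt_succ_of_lt (Fin.lt_def.mp hj)),
        h1 i (Nat.lt_succ_self _),
        fun j hj => absurd hj (by have := i.isLt; omega)⟩
  · refine pr_congr p fun x' y' => ?_
    constructor
    · rintro ⟨h1, _⟩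
      exact ⟨fun j hj => h1 j (Fin.lt_def.mpr hj), fun j hj => absurd hj (by omega)⟩
    · rintro ⟨h1, _⟩
      exact ⟨fun j hj => h1 j (Fin.lt_def.mp hj),
        fun j hj => absurd hj (by have := i.isLt; omega)⟩

lemma condX_1_eq (p : (Fin n → α) → (Fin n → β) → ℝ) (i : Fin n)
    (x : Fin n → α) (y : Fin n → β) :
    condX p 1 i x y = prab p x y ((i : ℕ)+1) (i : ℕ) / prab p x y (i : ℕ) (i : ℕ) := by
  unfold condX prab
  congr 1
  · refine pr_congr p fun x' y' => ?_
    constructor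
    · rintro ⟨h1, h2, h3⟩
      refine ⟨fun j hj => ?_, fun j hj => h3 j (by omega)⟩
      rcases Nat.lt_succ_iff_lt_or_eq.mp hj with hj | hj
      · exact h1 j (Fin.lt_def.mpr hj)
      · rw [show j = i from Fin.ext hj]; exact h2
    · rintro ⟨h1, h2⟩
      exact ⟨fun j hj => h1 j (Nat.lt_succ_of_lt (Fin.lt_def.mp hj)),
        h1 i (Nat.lt_succ_self _), fun j hj => h2 j (by omega)⟩

lemma condY_0_eq (p : (Fin n → α) → (Fin n → β) → ℝ) (i : Fin n)
    (x : Fin n → α) (y : Fin n → β) :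
    condY p 0 i x y = prab p x y ((i : ℕ)+1) ((i : ℕ)+1) / prab p x y ((i : ℕ)+1) (i : ℕ) := by
  unfold condY prab
  congr 1
  · refine pr_congr p fun x' y' => ?_
    constructor
    · rintro ⟨h1, h2, h3⟩
      refine ⟨fun j hj => h3 j (by omega), fun j hj => ?_⟩
      rcases Nat.lt_succ_iff_lt_or_eq.mp hj with hj | hj
      · exact h1 j (Fin.lt_def.mpr hj)
      · rw [show j = i from Fin.ext hj]; exact h2
    · rintro ⟨h1, h2⟩
      exact ⟨fun j hj => h2 j (Nat.lt_succ_of_lt (Fin.lt_def.mp hj)),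
        h2 i (Nat.lt_succ_self _), fun j hj => h1 j (by omega)⟩
  · refine pr_congr p fun x' y' => ?_
    constructor
    · rintro ⟨h1, h2⟩
      exact ⟨fun j hj => h2 j (by omega), fun j hj => h1 j (Fin.lt_def.mpr hj)⟩
    · rintro ⟨h1, h2⟩
      exact ⟨fun j hj => h2 j (Fin.lt_def.mp hj), fun j hj => h1 j (by omega)⟩

lemma condY_n_eq (p : (Fin n → α) → (Fin n → β) → ℝ) (i : Fin n)
    (x : Fin n → α) (y : Fin n → β) :
    condY p n i x y = prab p x y 0 ((i : ℕ)+1) / prab p x y 0 (i : ℕ) := by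
  unfold condY prab
  congr 1
  · refine pr_congr p fun x' y' => ?_
    constructor
    · rintro ⟨h1, h2, _⟩
      refine ⟨fun j hj => absurd hj (by omega), fun j hj => ?_⟩
      rcases Nat.lt_succ_iff_lt_or_eq.mp hj with hj | hj
      · exact h1 j (Fin.lt_def.mpr hj)
      · rw [show j = i from Fin.ext hj]; exact h2
    · rintro ⟨_, h2⟩
      exact ⟨fun j hj => h2 j (Nat.lt_succ_of_lt (Fin.lt_def.mp hj)),
        h2 i (Nat.lt_succ_self _),
        fun j hj => absurd hj (by have := i.isLt; omega)⟩
  · refine pr_congr p fun x' y' => ?_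
    constructor
    · rintro ⟨h1, _⟩
      exact ⟨fun j hj => absurd hj (by omega), fun j hj => h1 j (Fin.lt_def.mpr hj)⟩
    · rintro ⟨_, h2⟩
      exact ⟨fun j hj => h2 j (Fin.lt_def.mp hj),
        fun j hj => absurd hj (by have := i.isLt; omega)⟩

lemma prod_div_telescope (f : ℕ → ℝ) (hf : ∀ k, f k ≠ 0) (m : ℕ) :
    ∏ i ∈ Finset.range m, (f (i+1) / f i) = f m / f 0 := by
  induction m with
  | zero => simp [div_self (hf 0)]
  | succ m ih =>
      rw [Finset.prod_range_succ, ih, div_mul_div_comm, mul_comm (f 0) (f m)]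
      exact mul_div_mul_left _ _ (hf m)

end Aux

section Aux2

variable {n : ℕ}

lemma prod_condX_n {p : (Fin n → α) → (Fin n → β) → ℝ} (hp : IsPmf p)
    {x : Fin n → α} {y : Fin n → β} (h : 0 < p x y) :
    ∏ i : Fin n, condX p n i x y = pX p x := by
  have hne : ∀ k : ℕ, prab p x y k 0 ≠ 0 := fun k => ne_of_gt (prab_pos hp h k 0)
  calc ∏ i : Fin n, condX p n i x y
      = ∏ i ∈ Finset.range n, (prab p x y (i+1) 0 / prab p x y i 0) := by
        rw [← Fin.prod_univ_eq_prod_range (fun k => prab p x y (k+1) 0 / prab p x y k 0) n]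
        exact Finset.prod_congr rfl fun i _ => condX_n_eq p i x y
    _ = prab p x y n 0 / prab p x y 0 0 :=
        prod_div_telescope (fun k => prab p x y k 0) hne n
    _ = pX p x := by rw [prab_n0, prab_zero hp, div_one]

lemma prod_condY_n {p : (Fin n → α) → (Fin n → β) → ℝ} (hp : IsPmf p)
    {x : Fin n → α} {y : Fin n → β} (h : 0 < p x y) :
    ∏ i : Fin n, condY p n i x y = pY p y := by
  have hne : ∀ k : ℕ, prab p x y 0 k ≠ 0 := fun k => ne_of_gt (prab_pos hp h 0 k)
  calc ∏ i : Fin n, condY p n i x y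
      = ∏ i ∈ Finset.range n, (prab p x y 0 (i+1) / prab p x y 0 i) := by
        rw [← Fin.prod_univ_eq_prod_range (fun k => prab p x y 0 (k+1) / prab p x y 0 k) n]
        exact Finset.prod_congr rfl fun i _ => condY_n_eq p i x y
    _ = prab p x y 0 n / prab p x y 0 0 :=
        prod_div_telescope (fun k => prab p x y 0 k) hne n
    _ = pY p y := by rw [prab_0n, prab_zero hp, div_one]

lemma prod_mixed {p : (Fin n → α) → (Fin n → β) → ℝ} (hp : IsPmf p)
    {x : Fin n → α} {y : Fin n → β} (h : 0 < p x y) :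
    (∏ i : Fin n, condX p 1 i x y) * (∏ i : Fin n, condY p 0 i x y) = p x y := by
  have hne : ∀ a b : ℕ, prab p x y a b ≠ 0 := fun a b => ne_of_gt (prab_pos hp h a b)
  rw [← Finset.prod_mul_distrib]
  calc ∏ i : Fin n, (condX p 1 i x y * condY p 0 i x y)
      = ∏ i ∈ Finset.range n, (prab p x y (i+1) (i+1) / prab p x y i i) := by
        rw [← Fin.prod_univ_eq_prod_range
          (fun k => prab p x y (k+1) (k+1) / prab p x y k k) n]
        refine Finset.prod_congr rfl fun i _ => ?_
        rw [condX_1_eq, condY_0_eq, div_mul_div_comm,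
          mul_comm (prab p x y (i : ℕ) (i : ℕ)) (prab p x y ((i : ℕ)+1) (i : ℕ))]
        exact mul_div_mul_left _ _ (hne _ _)
    _ = prab p x y n n / prab p x y 0 0 :=
        prod_div_telescope (fun k => prab p x y k k) (fun k => hne k k) n
    _ = p x y := by rw [prab_nn, prab_zero hp, div_one]

lemma keylem {p : (Fin n → α) → (Fin n → β) → ℝ} (hp : IsPmf p)
    (x : Fin n → α) (y : Fin n → β) :
    p x y * Real.logb 2 (p x y / (pX p x * pY p y)) =
      p x y * ((∑ i : Fin n, Real.logb 2 (condY p 0 i x y / condY p n i x y)) +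
        (∑ i : Fin n, Real.logb 2 (condX p 1 i x y / condX p n i x y))) := by
  rcases eq_or_lt_of_le (hp.1 x y) with h | h
  · rw [← h, zero_mul, zero_mul]
  · congr 1
    have hne : ∀ a b : ℕ, prab p x y a b ≠ 0 := fun a b => ne_of_gt (prab_pos hp h a b)
    have hX1 : ∀ i : Fin n, condX p 1 i x y ≠ 0 := fun i => by
      rw [condX_1_eq]; exact div_ne_zero (hne _ _) (hne _ _)
    have hXn : ∀ i : Fin n, condX p n i x y ≠ 0 := fun i => by
      rw [condX_n_eq]; exact div_ne_zero (hne _ _) (hne _ _)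
    have hY0 : ∀ i : Fin n, condY p 0 i x y ≠ 0 := fun i => by
      rw [condY_0_eq]; exact div_ne_zero (hne _ _) (hne _ _)
    have hYn : ∀ i : Fin n, condY p n i x y ≠ 0 := fun i => by
      rw [condY_n_eq]; exact div_ne_zero (hne _ _) (hne _ _)
    have hpx : pX p x ≠ 0 := by rw [← prab_n0 p x y]; exact hne n 0
    have hpy : pY p y ≠ 0 := by rw [← prab_0n p x y]; exact hne 0 n
    have e1 : ∑ i : Fin n, Real.logb 2 (condY p 0 i x y / condY p n i x y)
        = (∑ i : Fin n, Real.logb 2 (condY p 0 i x y))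
          - (∑ i : Fin n, Real.logb 2 (condY p n i x y)) := by
      rw [← Finset.sum_sub_distrib]
      exact Finset.sum_congr rfl fun i _ => Real.logb_div (hY0 i) (hYn i)
    have e2 : ∑ i : Fin n, Real.logb 2 (condX p 1 i x y / condX p n i x y)
        = (∑ i : Fin n, Real.logb 2 (condX p 1 i x y))
          - (∑ i : Fin n, Real.logb 2 (condX p n i x y)) := by
      rw [← Finset.sum_sub_distrib]
      exact Finset.sum_congr rfl fun i _ => Real.logb_div (hX1 i) (hXn i)
    have e3 : ∑ i : Fin n, Real.logb 2 (condY p 0 i x y)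
        = Real.logb 2 (∏ i : Fin n, condY p 0 i x y) :=
      (Real.logb_prod _ _ fun i _ => hY0 i).symm
    have e4 : ∑ i : Fin n, Real.logb 2 (condY p n i x y)
        = Real.logb 2 (pY p y) := by
      rw [(Real.logb_prod _ _ fun i _ => hYn i).symm, prod_condY_n hp h]
    have e5 : ∑ i : Fin n, Real.logb 2 (condX p 1 i x y)
        = Real.logb 2 (∏ i : Fin n, condX p 1 i x y) :=
      (Real.logb_prod _ _ fun i _ => hX1 i).symm
    have e6 : ∑ i : Fin n, Real.logb 2 (condX p n i x y)
        = Real.logb 2 (pX p x) := by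
      rw [(Real.logb_prod _ _ fun i _ => hXn i).symm, prod_condX_n hp h]
    have e7 : Real.logb 2 (∏ i : Fin n, condX p 1 i x y)
        + Real.logb 2 (∏ i : Fin n, condY p 0 i x y) = Real.logb 2 (p x y) := by
      rw [← Real.logb_mul (Finset.prod_ne_zero_iff.mpr fun i _ => hX1 i)
        (Finset.prod_ne_zero_iff.mpr fun i _ => hY0 i), prod_mixed hp h]
    rw [e1, e2, e3, e4, e5, e6,
      Real.logb_div (ne_of_gt h) (mul_ne_zero hpx hpy), Real.logb_mul hpx hpy]
    linarith [e7]

end Aux2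

/-- conservation law for directed information (Massey–Massey),
`I(X^n; Y^n) = I(X^n → Y^n) + I(Y^{n-1} → X^n)`. -/
theorem conservation_law {n : ℕ}
    (p : (Fin n → α) → (Fin n → β) → ℝ) (hp : IsPmf p) :
    miXY p = dirXY p + dirY1X p := by
  have hd1 : dirXY p = ∑ x, ∑ y, ∑ i : Fin n,
      p x y * Real.logb 2 (condY p 0 i x y / condY p n i x y) := by
    unfold dirXY cmiXY
    rw [Finset.sum_comm]
    exact Finset.sum_congr rfl fun x _ => Finset.sum_comm
  have hd2 : dirY1X p = ∑ x, ∑ y, ∑ i : Fin n,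
      p x y * Real.logb 2 (condX p 1 i x y / condX p n i x y) := by
    unfold dirY1X
    rw [Finset.sum_comm]
    exact Finset.sum_congr rfl fun x _ => Finset.sum_comm
  rw [hd1, hd2, ← Finset.sum_add_distrib]
  unfold miXY
  refine Finset.sum_congr rfl fun x _ => ?_
  rw [← Finset.sum_add_distrib]
  refine Finset.sum_congr rfl fun y _ => ?_
  rw [keylem hp x y, mul_add, Finset.mul_sum, Finset.mul_sum]
end
end

section
/- Mismatched portfolio bound (Barron–Cover): if X is a random stock vector with pmf f on a finite set of nonnegative price-relative vectors, b_f is a log-optimal portfolio for f and b_g is a log-optimal portfolio for another pmf g, then E_f[log(b_f^T X)] − E_f[log(b_g^T X)] ≤ D(f ‖ g), the Kullback–Leibler divergence. -/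
open Real Filter Finset

noncomputable section

/-- mismatched portfolio bound (Barron–Cover). If the stock vector `X`
takes the value `v i ∈ ℝ^m` (nonnegative price relatives) with probability `f i`,
`bf` is a log-optimal portfolio for `f` and `bg` is a log-optimal portfolio for
another pmf `g`, `f` is absolutely continuous w.r.t. `g`, and the relevant
expected logarithms are finite (the wealth relatives are positive on the supports),
then `E_f[log(bfᵀX)] − E_f[log(bgᵀX)] ≤ D(f‖g)`. -/
theorem barron_cover_mismatch {ι : Type} [Fintype ι] {m : ℕ}
    (v : ι → Fin m → ℝ) (hv : ∀ i k, 0 ≤ v i k)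
    (f g : ι → ℝ)
    (hf : (∀ i, 0 ≤ f i) ∧ ∑ i, f i = 1)
    (hg : (∀ i, 0 ≤ g i) ∧ ∑ i, g i = 1)
    (habs : ∀ i, g i = 0 → f i = 0)
    (bf bg : Fin m → ℝ)
    (hbf : (∀ k, 0 ≤ bf k) ∧ ∑ k, bf k = 1)
    (hbg : (∀ k, 0 ≤ bg k) ∧ ∑ k, bg k = 1)
    (hbf_opt : ∀ b : Fin m → ℝ, (∀ k, 0 ≤ b k) → ∑ k, b k = 1 →
      ∑ i, f i * Real.logb 2 (∑ k, b k * v i k) ≤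
        ∑ i, f i * Real.logb 2 (∑ k, bf k * v i k))
    (hbg_opt : ∀ b : Fin m → ℝ, (∀ k, 0 ≤ b k) → ∑ k, b k = 1 →
      ∑ i, g i * Real.logb 2 (∑ k, b k * v i k) ≤
        ∑ i, g i * Real.logb 2 (∑ k, bg k * v i k))
    (hpos : ∀ i, 0 < f i ∨ 0 < g i →
      0 < ∑ k, bf k * v i k ∧ 0 < ∑ k, bg k * v i k) :
    ∑ i, f i * Real.logb 2 (∑ k, bf k * v i k) -
      ∑ i, f i * Real.logb 2 (∑ k, bg k * v i k) ≤
    ∑ i, f i * Real.logb 2 (f i / g i) := by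
  obtain ⟨hf0, hf1⟩ := hf
  obtain ⟨hg0, hg1⟩ := hg
  obtain ⟨hbf0, hbf1⟩ := hbf
  obtain ⟨hbg0, hbg1⟩ := hbg
  set wf : ι → ℝ := fun i => ∑ k, bf k * v i k with hwf
  set wg : ι → ℝ := fun i => ∑ k, bg k * v i k with hwg
  have hwf0 : ∀ i, 0 ≤ wf i := fun i =>
    Finset.sum_nonneg fun k _ => mul_nonneg (hbf0 k) (hv i k)
  have hwg0 : ∀ i, 0 ≤ wg i := fun i =>
    Finset.sum_nonneg fun k _ => mul_nonneg (hbg0 k) (hv i k)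
  set r : ι → ℝ := fun i => wf i / wg i with hrdef
  have hr0 : ∀ i, 0 ≤ r i := fun i => div_nonneg (hwf0 i) (hwg0 i)
  have hL2 : (0:ℝ) < Real.log 2 := Real.log_pos (by norm_num)
  -- Step 1: for each lam in (0,1], the optimality of bg gives a nonpositive sum
  have key : ∀ lam ∈ Set.Ioc (0:ℝ) 1,
      ∑ i, g i * Real.log (1 + lam * (r i - 1)) ≤ 0 := by
    intro lam hlam
    obtain ⟨hl0, hl1⟩ := hlam
    set b : Fin m → ℝ := fun k => (1 - lam) * bg k + lam * bf k with hb
    have hb0 : ∀ k, 0 ≤ b k := fun k =>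
      add_nonneg (mul_nonneg (by linarith) (hbg0 k)) (mul_nonneg hl0.le (hbf0 k))
    have hb1 : ∑ k, b k = 1 := by
      simp only [hb, Finset.sum_add_distrib, ← Finset.mul_sum, hbg1, hbf1]
      ring
    have hopt := hbg_opt b hb0 hb1
    have hbw : ∀ i, ∑ k, b k * v i k = (1 - lam) * wg i + lam * wf i := by
      intro i
      simp only [hb, hwg, hwf, add_mul, Finset.sum_add_distrib, Finset.mul_sum,
        mul_assoc]
    -- rewrite hopt termwise
    have hterm : ∀ i, g i * Real.log (1 + lam * (r i - 1)) =
        g i * Real.logb 2 (∑ k, b k * v i k) * Real.log 2 -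
        g i * Real.logb 2 (wg i) * Real.log 2 := by
      intro i
      rcases eq_or_lt_of_le (hg0 i) with h0 | h0
      · simp [← h0]
      · have hwgp : 0 < wg i := (hpos i (Or.inr h0)).2
        have hwfp : 0 < wf i := (hpos i (Or.inr h0)).1
        have hrp : 0 < r i := div_pos hwfp hwgp
        have hcp : 0 < 1 + lam * (r i - 1) := by nlinarith
        have hw : ∑ k, b k * v i k = wg i * (1 + lam * (r i - 1)) := by
          rw [hbw i]
          have : r i * wg i = wf i := div_mul_cancel₀ _ hwgp.ne'
          nlinarith [this]
        rw [hw]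
        rw [Real.logb, Real.logb, Real.log_mul hwgp.ne' hcp.ne']
        field_simp
        ring
    have hsum : ∑ i, g i * Real.log (1 + lam * (r i - 1)) =
        (∑ i, g i * Real.logb 2 (∑ k, b k * v i k) -
         ∑ i, g i * Real.logb 2 (wg i)) * Real.log 2 := by
      rw [sub_mul, Finset.sum_mul, Finset.sum_mul, ← Finset.sum_sub_distrib]
      exact Finset.sum_congr rfl fun i _ => hterm i
    rw [hsum]
    have : ∑ i, g i * Real.logb 2 (∑ k, b k * v i k) -
        ∑ i, g i * Real.logb 2 (wg i) ≤ 0 := by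
      have := hopt
      simp only [hwg] at this ⊢
      linarith
    nlinarith
  -- Step 2: differentiate at 0 to get the Kuhn-Tucker inequality
  have hKT : ∑ i, g i * (r i - 1) ≤ 0 := by
    set h : ℝ → ℝ := fun lam => ∑ i, g i * Real.log (1 + lam * (r i - 1)) with hh
    have hder : HasDerivAt h (∑ i, g i * (r i - 1)) 0 := by
      apply HasDerivAt.fun_sum
      intro i _
      have h1 : HasDerivAt (fun lam : ℝ => 1 + lam * (r i - 1)) (r i - 1) 0 := by
        simpa using ((hasDerivAt_id (0:ℝ)).mul_const (r i - 1)).const_add 1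
      have h2 := h1.log (by norm_num)
      have h3 := h2.const_mul (g i)
      simpa using h3
    have hslope := hasDerivAt_iff_tendsto_slope.mp hder
    have hsub : Set.Ioi (0:ℝ) ⊆ {(0:ℝ)}ᶜ := fun x hx => ne_of_gt hx
    have hslope' : Tendsto (slope h 0) (nhdsWithin 0 (Set.Ioi 0))
        (nhds (∑ i, g i * (r i - 1))) :=
      hslope.mono_left (nhdsWithin_mono _ hsub)
    refine le_of_tendsto hslope' ?_
    filter_upwards [Ioc_mem_nhdsGT_of_mem (Set.left_mem_Ico.mpr one_pos)] with lam hlam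
    have h0 : h 0 = 0 := by simp [hh]
    have hneg := key lam hlam
    rw [slope_def_field, h0, sub_zero, sub_zero]
    exact div_nonpos_of_nonpos_of_nonneg hneg hlam.1.le
  have gsum : ∑ i, g i * r i ≤ 1 := by
    have : ∑ i, g i * r i = ∑ i, g i * (r i - 1) + ∑ i, g i := by
      rw [← Finset.sum_add_distrib]
      exact Finset.sum_congr rfl fun i _ => by ring
    rw [this, hg1]
    linarith
  -- Step 3: Jensen on the support of f
  set t : Finset ι := Finset.univ.filter (fun i => 0 < f i) with ht
  have htmem : ∀ i, i ∈ t ↔ 0 < f i := by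
    intro i; simp [ht]
  have hft : ∑ i ∈ t, f i = 1 := by
    rw [← hf1]
    apply Finset.sum_subset (Finset.filter_subset _ _)
    intro i _ hi
    have := (htmem i).not.mp hi
    linarith [hf0 i]
  set p : ι → ℝ := fun i => g i * wf i / (f i * wg i) with hp
  have hpfact : ∀ i ∈ t, 0 < f i ∧ 0 < g i ∧ 0 < wf i ∧ 0 < wg i := by
    intro i hi
    have hfi : 0 < f i := (htmem i).mp hi
    have hgi : 0 < g i := by
      rcases eq_or_lt_of_le (hg0 i) with h0 | h0
      · exact absurd (habs i h0.symm) (by linarith)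
      · exact h0
    exact ⟨hfi, hgi, (hpos i (Or.inl hfi)).1, (hpos i (Or.inl hfi)).2⟩
  have hppos : ∀ i ∈ t, 0 < p i := by
    intro i hi
    obtain ⟨h1, h2, h3, h4⟩ := hpfact i hi
    exact div_pos (mul_pos h2 h3) (mul_pos h1 h4)
  have hfp : ∑ i ∈ t, f i * p i ≤ 1 := by
    have heq : ∑ i ∈ t, f i * p i = ∑ i ∈ t, g i * r i := by
      apply Finset.sum_congr rfl
      intro i hi
      obtain ⟨h1, h2, h3, h4⟩ := hpfact i hi
      show f i * (g i * wf i / (f i * wg i)) = g i * (wf i / wg i)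
      field_simp
    rw [heq]
    calc ∑ i ∈ t, g i * r i ≤ ∑ i, g i * r i := by
          apply Finset.sum_le_sum_of_subset_of_nonneg (Finset.filter_subset _ _)
          intro i _ _
          exact mul_nonneg (hg0 i) (hr0 i)
      _ ≤ 1 := gsum
  have hjensen : ∑ i ∈ t, f i * Real.log (p i) ≤ 0 := by
    have hcc : ConcaveOn ℝ (Set.Ioi 0) Real.log := strictConcaveOn_log_Ioi.concaveOn
    have := hcc.le_map_sum (t := t) (w := f) (p := p)
      (fun i hi => (hf0 i)) hft (fun i hi => hppos i hi)
    simp only [smul_eq_mul] at this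
    refine le_trans this ?_
    apply Real.log_nonpos
    · exact Finset.sum_nonneg fun i hi => mul_nonneg (hf0 i) (hppos i hi).le
    · exact hfp
  -- Step 4: conclude
  have hmain : ∑ i, f i * Real.logb 2 (wf i) - ∑ i, f i * Real.logb 2 (wg i) -
      ∑ i, f i * Real.logb 2 (f i / g i) =
      (∑ i ∈ t, f i * Real.log (p i)) / Real.log 2 := by
    rw [← Finset.sum_sub_distrib, ← Finset.sum_sub_distrib, Finset.sum_div]
    rw [← Finset.sum_subset (Finset.filter_subset (fun i => 0 < f i) Finset.univ)
      (f := fun i => f i * Real.logb 2 (wf i) - f i * Real.logb 2 (wg i) -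
        f i * Real.logb 2 (f i / g i))]
    · apply Finset.sum_congr rfl
      intro i hi
      obtain ⟨h1, h2, h3, h4⟩ := hpfact i hi
      rw [hp]
      rw [Real.logb, Real.logb, Real.logb,
        Real.log_div (mul_pos h2 h3).ne' (mul_pos h1 h4).ne',
        Real.log_mul h2.ne' h3.ne', Real.log_mul h1.ne' h4.ne',
        Real.log_div h1.ne' h2.ne']
      field_simp
      ring
    · intro i _ hi
      have := (htmem i).not.mp hi
      have hfi : f i = 0 := by linarith [hf0 i]
      simp [hfi]
  have : ∑ i, f i * Real.logb 2 (wf i) - ∑ i, f i * Real.logb 2 (wg i) -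
      ∑ i, f i * Real.logb 2 (f i / g i) ≤ 0 := by
    rw [hmain]
    exact div_nonpos_of_nonpos_of_nonneg hjensen hL2.le
  simp only [hwf, hwg] at this
  linarith
end
end
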